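/- A d-permutation of [3] (first row 1 2 3) is separable if and only if the value 2 does not occur both in the first column and in the third column, i.e., either no row has 2 in position 1, or no row has 2 in position 3. -/
import Mathlib


/-- `P` is a `d`-permutation: a sequence of `d` permutations of `[n]`
whose first entry is the identity. -/
def IsDPerm {d n : ℕ} (P : Fin d → Equiv.Perm (Fin n)) : Prop :=
  ∀ h : 0 < d, P ⟨0, h⟩ = 1

/-- Separability of the restriction of the `d` rows `P` to the block of
columns `[a, b)`: either the block consists of a single column, or it can be
split into two consecutive sub-blocks such that in each row all entries of one
sub-block are smaller than all entries of the other, and both sub-blocks are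
themselves separable. -/
inductive SepOn {d : ℕ} (P : Fin d → ℕ → ℕ) : ℕ → ℕ → Prop
  | single (a : ℕ) : SepOn P a (a + 1)
  | split (a l b : ℕ) (h1 : a < l) (h2 : l < b)
      (hmono : ∀ i : Fin d,
        (∀ j1 j2, a ≤ j1 → j1 < l → l ≤ j2 → j2 < b → P i j1 < P i j2) ∨
        (∀ j1 j2, a ≤ j1 → j1 < l → l ≤ j2 → j2 < b → P i j2 < P i j1))
      (hL : SepOn P a l) (hR : SepOn P l b) : SepOn P a b

/-- The rows of a `d`-permutation, as functions `ℕ → ℕ`. -/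
def dPermRows {d n : ℕ} (P : Fin d → Equiv.Perm (Fin n)) : Fin d → ℕ → ℕ :=
  fun i j => if h : j < n then (P i ⟨j, h⟩ : ℕ) else 0

/-- A `d`-permutation of `[n]` is separable if its full block of columns is
recursively separable. -/
def IsSepDPerm {d n : ℕ} (P : Fin d → Equiv.Perm (Fin n)) : Prop :=
  SepOn (dPermRows P) 0 n


lemma rows_eq {d : ℕ} (P : Fin d → Equiv.Perm (Fin 3)) (i : Fin d) (j : ℕ) (h : j < 3) :
    dPermRows P i j = (P i ⟨j, h⟩ : ℕ) := by simp [dPermRows, h]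

lemma vals_ne {d : ℕ} (P : Fin d → Equiv.Perm (Fin 3)) (i : Fin d)
    (j k : Fin 3) (h : j ≠ k) : (P i j : ℕ) ≠ (P i k : ℕ) := by
  intro hv
  exact h ((P i).injective (Fin.ext hv))

/-- A d-permutation of `[3]` is separable iff the (0-indexed) value `1`
(i.e. the value 2 of `{1,2,3}`) does not occur both in the first and in the
last column: either no row has value 2 in position 1, or no row has value 2 in
position 3. -/
theorem sep_dPerm_three_iff (d : ℕ) (hd : 0 < d)
    (P : Fin d → Equiv.Perm (Fin 3)) (hP : P ⟨0, hd⟩ = 1) :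
    IsSepDPerm P ↔
      (∀ i : Fin d, P i 0 ≠ 1) ∨ (∀ i : Fin d, P i 2 ≠ 1) := by
  have hlt : ∀ (i : Fin d) (j : Fin 3), (P i j : ℕ) < 3 := fun i j => (P i j).isLt
  have h01 : ∀ i : Fin d, (P i 0 : ℕ) ≠ (P i 1 : ℕ) := fun i => vals_ne P i 0 1 (by decide)
  have h02 : ∀ i : Fin d, (P i 0 : ℕ) ≠ (P i 2 : ℕ) := fun i => vals_ne P i 0 2 (by decide)
  have h12 : ∀ i : Fin d, (P i 1 : ℕ) ≠ (P i 2 : ℕ) := fun i => vals_ne P i 1 2 (by decide)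
  have hr0 : ∀ i : Fin d, dPermRows P i 0 = (P i 0 : ℕ) := fun i => rows_eq P i 0 (by omega)
  have hr1 : ∀ i : Fin d, dPermRows P i 1 = (P i 1 : ℕ) := fun i => rows_eq P i 1 (by omega)
  have hr2 : ∀ i : Fin d, dPermRows P i 2 = (P i 2 : ℕ) := fun i => rows_eq P i 2 (by omega)
  have hne1 : ∀ (j : Fin 3), j ≠ 1 ↔ (j : ℕ) ≠ 1 := by decide
  constructor
  · intro h
    cases h with
    | split a l b hal hlb hmono hL hR =>
      interval_cases l
      · left
        intro i
        rw [hne1]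
        rcases hmono i with hm | hm
        · have := hm 0 1 (by omega) (by omega) (by omega) (by omega)
          have := hm 0 2 (by omega) (by omega) (by omega) (by omega)
          rw [hr0 i, hr1 i, hr2 i] at *
          have := hlt i 0; have := hlt i 1; have := hlt i 2
          have := h01 i; have := h02 i; have := h12 i
          omega
        · have := hm 0 1 (by omega) (by omega) (by omega) (by omega)
          have := hm 0 2 (by omega) (by omega) (by omega) (by omega)
          rw [hr0 i, hr1 i, hr2 i] at *
          have := hlt i 0; have := hlt i 1; have := hlt i 2
          have := h01 i; have := h02 i; have := h12 i
          omega
      · right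
        intro i
        rw [hne1]
        rcases hmono i with hm | hm
        · have := hm 0 2 (by omega) (by omega) (by omega) (by omega)
          have := hm 1 2 (by omega) (by omega) (by omega) (by omega)
          rw [hr0 i, hr1 i, hr2 i] at *
          have := hlt i 0; have := hlt i 1; have := hlt i 2
          have := h01 i; have := h02 i; have := h12 i
          omega
        · have := hm 0 2 (by omega) (by omega) (by omega) (by omega)
          have := hm 1 2 (by omega) (by omega) (by omega) (by omega)
          rw [hr0 i, hr1 i, hr2 i] at *
          have := hlt i 0; have := hlt i 1; have := hlt i 2
          have := h01 i; have := h02 i; have := h12 i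
          omega
  · have hR13 : SepOn (dPermRows P) 1 3 := by
      refine SepOn.split 1 2 3 (by omega) (by omega) ?_ (SepOn.single 1) (SepOn.single 2)
      intro i
      rcases lt_or_gt_of_ne (h12 i) with h | h
      · left; intro j1 j2 a1 a2 a3 a4
        have : j1 = 1 := by omega
        have : j2 = 2 := by omega
        subst_vars; rw [hr1 i, hr2 i]; exact h
      · right; intro j1 j2 a1 a2 a3 a4
        have : j1 = 1 := by omega
        have : j2 = 2 := by omega
        subst_vars; rw [hr1 i, hr2 i]; exact h
    have hL02 : SepOn (dPermRows P) 0 2 := by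
      refine SepOn.split 0 1 2 (by omega) (by omega) ?_ (SepOn.single 0) (SepOn.single 1)
      intro i
      rcases lt_or_gt_of_ne (h01 i) with h | h
      · left; intro j1 j2 a1 a2 a3 a4
        have : j1 = 0 := by omega
        have : j2 = 1 := by omega
        subst_vars; rw [hr0 i, hr1 i]; exact h
      · right; intro j1 j2 a1 a2 a3 a4
        have : j1 = 0 := by omega
        have : j2 = 1 := by omega
        subst_vars; rw [hr0 i, hr1 i]; exact h
    rintro (h | h)
    · refine SepOn.split 0 1 3 (by omega) (by omega) ?_ (SepOn.single 0) hR13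
      intro i
      have hv := (hne1 _).mp (h i)
      have := hlt i 0; have := hlt i 1; have := hlt i 2
      have := h01 i; have := h02 i; have := h12 i
      rcases Nat.lt_or_ge (P i 0 : ℕ) 1 with hc | hc
      · left; intro j1 j2 a1 a2 a3 a4
        have : j1 = 0 := by omega
        have : j2 = 1 ∨ j2 = 2 := by omega
        subst_vars
        rcases this with rfl | rfl <;> rw [hr0 i] <;> [rw [hr1 i]; rw [hr2 i]] <;> omega
      · right; intro j1 j2 a1 a2 a3 a4
        have : j1 = 0 := by omega
        have : j2 = 1 ∨ j2 = 2 := by omega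
        subst_vars
        rcases this with rfl | rfl <;> rw [hr0 i] <;> [rw [hr1 i]; rw [hr2 i]] <;> omega
    · refine SepOn.split 0 2 3 (by omega) (by omega) ?_ hL02 (SepOn.single 2)
      intro i
      have hv := (hne1 _).mp (h i)
      have := hlt i 0; have := hlt i 1; have := hlt i 2
      have := h01 i; have := h02 i; have := h12 i
      rcases Nat.lt_or_ge (P i 2 : ℕ) 1 with hc | hc
      · right; intro j1 j2 a1 a2 a3 a4
        have : j2 = 2 := by omega
        have : j1 = 0 ∨ j1 = 1 := by omega
        subst_vars
        rcases this with rfl | rfl <;> rw [hr2 i] <;> [rw [hr0 i]; rw [hr1 i]] <;> omega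
      · left; intro j1 j2 a1 a2 a3 a4
        have : j2 = 2 := by omega
        have : j1 = 0 ∨ j1 = 1 := by omega
        subst_vars
        rcases this with rfl | rfl <;> rw [hr2 i] <;> [rw [hr0 i]; rw [hr1 i]] <;> omega
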